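/- A non-negative square matrix F has all its basic components (strongly connected components of maximal spectral radius) coinciding with its final components (components with no access to other components) if and only if F admits a positive right eigenvector for its spectral radius. -/

import Mathlib

open scoped Classical ENNReal

namespace Umbrella

variable {n : Type*} [Fintype n] [DecidableEq n]

/-- Reachability in the digraph of nonzero entries of `F`. -/
def Reach (F : Matrix n n ℝ) (i j : n) : Prop :=
  Relation.ReflTransGen (fun a b => F a b ≠ 0) i j

/-- `i` and `j` lie in the same strongly connected component. -/
def SameComp (F : Matrix n n ℝ) (i j : n) : Prop := Reach F i j ∧ Reach F j i

/-- The spectral radius of a matrix. -/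
noncomputable def sr (F : Matrix n n ℝ) : ℝ≥0∞ := spectralRadius ℝ F

/-- The principal submatrix corresponding to the component of `i`. -/
noncomputable def compMatrix (F : Matrix n n ℝ) (i : n) :
    Matrix {j // SameComp F i j} {j // SameComp F i j} ℝ :=
  F.submatrix Subtype.val Subtype.val

/-- The component of `i` is basic: maximal spectral radius. -/
def IsBasic (F : Matrix n n ℝ) (i : n) : Prop := sr (compMatrix F i) = sr F

/-- The component of `i` is final: no access to any other component. -/
def IsFinal (F : Matrix n n ℝ) (i : n) : Prop := ∀ j, Reach F i j → Reach F j i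


section UmbrellaAux
set_option linter.unusedSectionVars false
set_option linter.unreachableTactic false
set_option linter.unusedTactic false
set_option maxHeartbeats 1000000

section exr
lemma exists_rel_maximal {α : Type*} (R : α → α → Prop) (htrans : Transitive R)
    (s : Finset α) (hs : s.Nonempty) : ∃ m ∈ s, ∀ j ∈ s, R m j → R j m := by
  classical
  induction s using Finset.induction_on with
  | empty => exact absurd hs (by simp)
  | @insert a s ha ih =>
    by_cases hse : s.Nonempty
    · obtain ⟨m, hm, hmax⟩ := ih hse
      by_cases hma : R m a
      · refine ⟨a, Finset.mem_insert_self a s, fun j hj haj => ?_⟩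
        rcases Finset.mem_insert.mp hj with rfl | hj
        · exact haj
        · exact htrans (hmax j hj (htrans hma haj)) hma
      · refine ⟨m, Finset.mem_insert_of_mem hm, fun j hj hmj => ?_⟩
        rcases Finset.mem_insert.mp hj with rfl | hj
        · exact absurd hmj hma
        · exact hmax j hj hmj
    · rw [Finset.not_nonempty_iff_eq_empty] at hse
      subst hse
      exact ⟨a, Finset.mem_insert_self a ∅, fun j hj haj => by
        rcases Finset.mem_insert.mp hj with rfl | hj
        · exact haj
        · exact absurd hj (by simp)⟩

variable {n : Type*} [Fintype n] [DecidableEq n]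

lemma reach_refl (F : Matrix n n ℝ) (i : n) : Reach F i i := Relation.ReflTransGen.refl

lemma reach_trans {F : Matrix n n ℝ} {i j k : n} (h1 : Reach F i j) (h2 : Reach F j k) :
    Reach F i k := Relation.ReflTransGen.trans h1 h2

lemma sameComp_refl (F : Matrix n n ℝ) (i : n) : SameComp F i i :=
  ⟨reach_refl F i, reach_refl F i⟩

def Irred {m : Type*} [Fintype m] (B : Matrix m m ℝ) : Prop :=
  ∀ i j, Relation.ReflTransGen (fun a b => B a b ≠ 0) i j

/-- paths between members of a class can be taken inside the class -/
lemma reach_block {F : Matrix n n ℝ} {i : n} {a b : n} (h : Reach F a b) :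
    ∀ (ha : SameComp F i a) (hb : SameComp F i b),
    Relation.ReflTransGen (fun x y : {j // SameComp F i j} => F x.val y.val ≠ 0)
      ⟨a, ha⟩ ⟨b, hb⟩ := by
  induction h using Relation.ReflTransGen.head_induction_on with
  | refl => intro ha hb; exact Relation.ReflTransGen.refl
  | @head x c hxc hcb ih =>
    intro ha hb
    have hc : SameComp F i c :=
      ⟨reach_trans ha.1 (Relation.ReflTransGen.single hxc), reach_trans hcb hb.2⟩
    exact Relation.ReflTransGen.head hxc (ih hc hb)

lemma irred_compMatrix (F : Matrix n n ℝ) (i : n) : Irred (compMatrix F i) := by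
  rintro ⟨a, ha⟩ ⟨b, hb⟩
  have h : Reach F a b := reach_trans ha.2 hb.1
  exact reach_block h ha hb

/-- first exit edge out of the class of i -/
lemma exists_exit_edge {F : Matrix n n ℝ} {i : n} (h : ¬ (∀ j, Reach F i j → Reach F j i)) :
    ∃ a b, SameComp F i a ∧ F a b ≠ 0 ∧ ¬ SameComp F i b := by
  push_neg at h
  obtain ⟨k, hik, hki⟩ := h
  have : ∀ x, Reach F x k → SameComp F i x →
      ∃ a b, SameComp F i a ∧ F a b ≠ 0 ∧ ¬ SameComp F i b := by
    intro x hx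
    induction hx using Relation.ReflTransGen.head_induction_on with
    | refl => intro hik2; exact absurd hik2.2 hki
    | @head x c hxc hcb ih =>
      intro hx2
      by_cases hc : SameComp F i c
      · exact ih hc
      · exact ⟨x, c, hx2, hxc, hc⟩
  exact this i hik (sameComp_refl F i)

lemma reach_closed {F : Matrix n n ℝ} {D : Finset n}
    (hDC : ∀ j ∈ D, ∀ k, F j k ≠ 0 → k ∈ D) {j k : n} (h : Reach F j k) (hj : j ∈ D) :
    k ∈ D := by
  induction h with
  | refl => exact hj
  | tail _ hedge ih => exact hDC _ ih _ hedge
end exr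

section core
variable {m : Type*} [Fintype m] [DecidableEq m]

lemma mem_spectrum_of_eig (B : Matrix m m ℝ) (r : ℝ) (x : m → ℝ) (hx : x ≠ 0)
    (h : B.mulVec x = r • x) : r ∈ spectrum ℝ B := by
  rw [spectrum.mem_iff, Matrix.isUnit_iff_isUnit_det, isUnit_iff_ne_zero, not_not,
    ← Matrix.exists_mulVec_eq_zero_iff]
  refine ⟨x, hx, ?_⟩
  have : (algebraMap ℝ (Matrix m m ℝ)) r = r • (1 : Matrix m m ℝ) := by
    simp [Algebra.algebraMap_eq_smul_one]
  rw [this, Matrix.sub_mulVec, Matrix.smul_mulVec, Matrix.one_mulVec, h, sub_self]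

lemma eig_of_mem_spectrum (B : Matrix m m ℝ) (r : ℝ) (hr : r ∈ spectrum ℝ B) :
    ∃ x : m → ℝ, x ≠ 0 ∧ B.mulVec x = r • x := by
  rw [spectrum.mem_iff, Matrix.isUnit_iff_isUnit_det, isUnit_iff_ne_zero, not_not,
    ← Matrix.exists_mulVec_eq_zero_iff] at hr
  obtain ⟨x, hx, hx2⟩ := hr
  refine ⟨x, hx, ?_⟩
  have : (algebraMap ℝ (Matrix m m ℝ)) r = r • (1 : Matrix m m ℝ) := by
    simp [Algebra.algebraMap_eq_smul_one]
  rw [this, Matrix.sub_mulVec, Matrix.smul_mulVec, Matrix.one_mulVec, sub_eq_zero] at hx2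
  exact hx2.symm


lemma le_sr (B : Matrix m m ℝ) (r : ℝ) (hr : r ∈ spectrum ℝ B) :
    ENNReal.ofReal |r| ≤ sr B := by
  rw [sr, spectralRadius]
  have : ENNReal.ofReal |r| = (‖r‖₊ : ℝ≥0∞) := by
    rw [← Real.norm_eq_abs]; exact ofReal_norm r
  rw [this]
  exact le_iSup₂ (f := fun k (_ : k ∈ spectrum ℝ B) => (‖k‖₊ : ℝ≥0∞)) r hr

lemma abs_eig_le (B : Matrix m m ℝ) (hB : ∀ i j, 0 ≤ B i j) (v : m → ℝ) (hv : ∀ i, 0 < v i)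
    (r : ℝ) (hsub : ∀ i, B.mulVec v i ≤ r * v i) : ∀ t ∈ spectrum ℝ B, |t| ≤ r := by
  intro t ht
  obtain ⟨x, hx, hxe⟩ := eig_of_mem_spectrum B t ht
  have hne : Nonempty m := by
    by_contra h
    exact hx (funext fun i => absurd ⟨i⟩ h)
  -- choose i₀ maximizing |x i| / v i
  obtain ⟨i₀, -, hi₀⟩ := Finset.exists_max_image Finset.univ (fun i => |x i| / v i)
    ⟨Classical.arbitrary m, Finset.mem_univ _⟩
  set c := |x i₀| / v i₀ with hc
  have hcpos : 0 < c := by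
    obtain ⟨j, hj⟩ := Function.ne_iff.mp hx
    have : 0 < |x j| / v j := div_pos (abs_pos.mpr hj) (hv j)
    exact lt_of_lt_of_le this (hi₀ j (Finset.mem_univ j))
  have hle : ∀ j, |x j| ≤ c * v j := fun j => by
    have := hi₀ j (Finset.mem_univ j)
    calc |x j| = (|x j| / v j) * v j := by rw [div_mul_cancel₀ _ (hv j).ne.symm]
    _ ≤ c * v j := by nlinarith [hv j]
  have key : |t| * |x i₀| ≤ c * (r * v i₀) := by
    have h1 : |t| * |x i₀| = |t * x i₀| := (abs_mul t (x i₀)).symm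
    have h2 : t * x i₀ = B.mulVec x i₀ := by
      have := congrFun hxe i₀; simp [Pi.smul_apply] at this; linarith [this]
    rw [h1, h2]
    calc |B.mulVec x i₀| ≤ ∑ j, B i₀ j * (c * v j) := by
          rw [Matrix.mulVec, dotProduct]
          refine le_trans (Finset.abs_sum_le_sum_abs _ _) (Finset.sum_le_sum fun j _ => ?_)
          rw [abs_mul, abs_of_nonneg (hB i₀ j)]
          exact mul_le_mul_of_nonneg_left (hle j) (hB i₀ j)
    _ = c * (B.mulVec v i₀) := by
          rw [Matrix.mulVec, dotProduct, Finset.mul_sum]; congr 1; ext j; ring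
    _ ≤ c * (r * v i₀) := mul_le_mul_of_nonneg_left (hsub i₀) hcpos.le
  have hxi₀ : |x i₀| = c * v i₀ := by rw [hc, div_mul_cancel₀ _ (hv i₀).ne.symm]
  rw [hxi₀] at key
  have := hv i₀
  nlinarith [mul_pos hcpos this]

lemma sr_le (B : Matrix m m ℝ) (hB : ∀ i j, 0 ≤ B i j) (v : m → ℝ) (hv : ∀ i, 0 < v i)
    (r : ℝ) (hsub : ∀ i, B.mulVec v i ≤ r * v i) : sr B ≤ ENNReal.ofReal r := by
  rw [sr, spectralRadius]
  refine iSup₂_le fun k hk => ?_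
  have h := abs_eig_le B hB v hv r hsub k hk
  calc (‖k‖₊ : ℝ≥0∞) = ENNReal.ofReal |k| := by
        rw [← Real.norm_eq_abs]; exact (ofReal_norm k).symm
  _ ≤ ENNReal.ofReal r := ENNReal.ofReal_le_ofReal h
lemma entry_nonneg_mul {B C : Matrix m m ℝ} (hB : ∀ i j, 0 ≤ B i j) (hC : ∀ i j, 0 ≤ C i j) :
    ∀ i j, 0 ≤ (B * C) i j := fun i j =>
  Finset.sum_nonneg fun k _ => mul_nonneg (hB i k) (hC k j)

lemma entry_nonneg_pow {B : Matrix m m ℝ} (hB : ∀ i j, 0 ≤ B i j) (k : ℕ) :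
    ∀ i j, 0 ≤ (B ^ k) i j := by
  induction k with
  | zero => intro i j; by_cases h : i = j <;> simp [Matrix.one_apply, h]
  | succ k ih => rw [pow_succ]; exact entry_nonneg_mul ih hB

lemma exists_pow_pos {B : Matrix m m ℝ} (hB : ∀ i j, 0 ≤ B i j) {i j : m}
    (h : Relation.ReflTransGen (fun a b => B a b ≠ 0) i j) :
    ∃ k, 0 < (B ^ k) i j := by
  induction h using Relation.ReflTransGen.head_induction_on with
  | refl => exact ⟨0, by simp⟩
  | head hab _ ih =>
    obtain ⟨k, hk⟩ := ih
    rename_i a b _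
    refine ⟨k + 1, ?_⟩
    have : (B ^ (k+1)) a j = ∑ l, B a l * (B ^ k) l j := by
      rw [pow_succ']; rfl
    rw [this]
    have hpos : 0 < B a b * (B ^ k) b j :=
      mul_pos (lt_of_le_of_ne (hB a b) (Ne.symm hab)) hk
    refine lt_of_lt_of_le hpos ?_
    refine Finset.single_le_sum (f := fun l => B a l * (B ^ k) l j)
      (fun l _ => mul_nonneg (hB a l) (entry_nonneg_pow hB k l j)) (Finset.mem_univ b)

lemma one_add_pow_ge {B : Matrix m m ℝ} (hB : ∀ i j, 0 ≤ B i j) {k N : ℕ} (hkN : k ≤ N)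
    (i j : m) : (B ^ k) i j ≤ ((1 + B) ^ N) i j := by
  have hcomm : Commute B (1 : Matrix m m ℝ) := Commute.one_right B
  have hexp := hcomm.add_pow N
  have hentry : ((B + 1) ^ N) i j = ∑ l ∈ Finset.range (N + 1), (B ^ l) i j * (N.choose l : ℝ) := by
    rw [hexp, Matrix.sum_apply]
    refine Finset.sum_congr rfl fun l _ => ?_
    rw [one_pow, mul_one, ← Matrix.diagonal_natCast, Matrix.mul_diagonal]
  rw [add_comm 1 B, hentry]
  have hone : (1 : ℝ) ≤ (N.choose k : ℝ) := by
    exact_mod_cast (Nat.choose_pos hkN)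
  calc (B ^ k) i j ≤ (B ^ k) i j * (N.choose k : ℝ) :=
        le_mul_of_one_le_right (entry_nonneg_pow hB k i j) hone
  _ ≤ ∑ l ∈ Finset.range (N + 1), (B ^ l) i j * (N.choose l : ℝ) :=
        Finset.single_le_sum (f := fun l => (B ^ l) i j * (N.choose l : ℝ))
          (fun l _ => mul_nonneg (entry_nonneg_pow hB l i j) (Nat.cast_nonneg _))
          (Finset.mem_range.mpr (Nat.lt_succ_of_le hkN))

/-- A uniform power `N` such that `(1+B)^N` has all entries positive, for irreducible `B`. -/
lemma exists_uniform_pos {B : Matrix m m ℝ} (hB : ∀ i j, 0 ≤ B i j) (hirr : Irred B) :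
    ∃ N : ℕ, ∀ i j, 0 < ((1 + B) ^ N) i j := by
  have hch : ∀ p : m × m, ∃ k, 0 < (B ^ k) p.1 p.2 := fun p => exists_pow_pos hB (hirr p.1 p.2)
  choose f hf using hch
  refine ⟨Finset.univ.sup f, fun i j => ?_⟩
  exact lt_of_lt_of_le (hf (i, j)) (one_add_pow_ge hB (Finset.le_sup (Finset.mem_univ (i,j))) i j)
theorem exists_perron (B : Matrix m m ℝ) [Nonempty m] (hB : ∀ i j, 0 ≤ B i j)
    (hposN : ∃ N : ℕ, ∀ i j, 0 < ((1 + B) ^ N) i j) :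
    ∃ ρ : ℝ, 0 ≤ ρ ∧ ∃ u : m → ℝ, (∀ i, 0 < u i) ∧ B.mulVec u = ρ • u := by
  classical
  obtain ⟨N, hN⟩ := hposN
  set M : ℝ := ∑ i, ∑ j, B i j with hM
  have hbound : ∀ (t : ℝ) (x : m → ℝ), (∀ i, 0 ≤ x i) → (∑ i, x i) = 1 →
      (∀ i, t * x i ≤ B.mulVec x i) → t ≤ M := by
    intro t x hx hs hineq
    have hx1 : ∀ j, x j ≤ 1 := fun j => by
      rw [← hs]
      exact Finset.single_le_sum (fun i _ => hx i) (Finset.mem_univ j)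
    calc t = ∑ i, t * x i := by rw [← Finset.mul_sum, hs, mul_one]
    _ ≤ ∑ i, B.mulVec x i := Finset.sum_le_sum fun i _ => hineq i
    _ = ∑ i, ∑ j, B i j * x j := rfl
    _ ≤ M := Finset.sum_le_sum fun i _ => Finset.sum_le_sum fun j _ =>
        mul_le_of_le_one_right (hB i j) (hx1 j)
  set D : Set (ℝ × (m → ℝ)) := {p | (∀ i, 0 ≤ p.2 i) ∧ (∑ i, p.2 i) = 1 ∧ 0 ≤ p.1 ∧
    ∀ i, p.1 * p.2 i ≤ B.mulVec p.2 i} with hDdef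
  have hcont : ∀ i : m, Continuous fun p : ℝ × (m → ℝ) => B.mulVec p.2 i := by
    intro i
    simp only [Matrix.mulVec, dotProduct]
    exact continuous_finset_sum _ fun j _ => continuous_const.mul
      ((continuous_apply j).comp continuous_snd)
  have hclosed : IsClosed D := by
    rw [hDdef]
    simp only [Set.setOf_and]
    refine IsClosed.inter ?_ (IsClosed.inter ?_ (IsClosed.inter ?_ ?_))
    · rw [Set.setOf_forall]
      exact isClosed_iInter fun i => isClosed_le continuous_const
        ((continuous_apply i).comp continuous_snd)
    · exact isClosed_eq (continuous_finset_sum _ fun i _ =>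
        (continuous_apply i).comp continuous_snd) continuous_const
    · exact isClosed_le continuous_const continuous_fst
    · rw [Set.setOf_forall]
      exact isClosed_iInter fun i => isClosed_le
        (continuous_fst.mul ((continuous_apply i).comp continuous_snd)) (hcont i)
  have hsub : D ⊆ (Set.Icc (0:ℝ) M) ×ˢ (Set.Icc (0 : m → ℝ) 1) := by
    rintro ⟨t, x⟩ ⟨h1, h2, h3, h4⟩
    refine ⟨⟨h3, hbound t x h1 h2 h4⟩, ?_, ?_⟩
    · rw [Pi.le_def]; intro i; exact h1 i
    · rw [Pi.le_def]; intro i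
      simp only [Pi.one_apply]
      rw [← h2]
      exact Finset.single_le_sum (fun j _ => h1 j) (Finset.mem_univ i)
  have hcomp : IsCompact D :=
    ((isCompact_Icc).prod (isCompact_Icc)).of_isClosed_subset hclosed hsub
  have hnD : D.Nonempty := by
    refine ⟨(0, fun _ => (Fintype.card m : ℝ)⁻¹), fun i => by positivity, ?_, le_refl 0, ?_⟩
    · rw [Finset.sum_const, Finset.card_univ, nsmul_eq_mul]
      exact mul_inv_cancel₀ (Nat.cast_pos.mpr Fintype.card_pos).ne'
    · intro i
      rw [zero_mul]
      exact Finset.sum_nonneg fun j _ => mul_nonneg (hB i j) (by positivity)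
  obtain ⟨p, hpD, hpmax⟩ := hcomp.exists_isMaxOn hnD continuous_fst.continuousOn
  obtain ⟨hx0, hxs, hρ0, hxsub⟩ := hpD
  set ρ := p.1 with hρ
  set x₀ := p.2 with hx₀
  have hx₀ne : ∃ j, 0 < x₀ j := by
    by_contra h
    push_neg at h
    have : (∑ i, x₀ i) ≤ 0 := Finset.sum_nonpos fun i _ => h i
    rw [hxs] at this; linarith
  -- B.mulVec x₀ = ρ • x₀
  have hposvec : ∀ z : m → ℝ, (∀ i, 0 ≤ z i) → (∃ j, 0 < z j) →
      ∀ i, 0 < ((1 + B) ^ N).mulVec z i := by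
    intro z hz ⟨j, hj⟩ i
    have : ((1 + B) ^ N) i j * z j ≤ ((1 + B) ^ N).mulVec z i := by
      refine Finset.single_le_sum (f := fun l => ((1 + B) ^ N) i l * z l)
        (fun l _ => mul_nonneg (hN i l).le (hz l)) (Finset.mem_univ j)
    exact lt_of_lt_of_le (mul_pos (hN i j) hj) this
  have heq : B.mulVec x₀ = ρ • x₀ := by
    by_contra hne
    set w : m → ℝ := B.mulVec x₀ - ρ • x₀ with hw
    have hw0 : ∀ i, 0 ≤ w i := fun i => by
      simp only [hw, Pi.sub_apply, Pi.smul_apply, smul_eq_mul, sub_nonneg]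
      exact hxsub i
    have hwne : ∃ j, 0 < w j := by
      by_contra h
      push_neg at h
      apply hne
      rw [← sub_eq_zero, ← hw]
      exact funext fun i => le_antisymm (h i) (hw0 i)
    set y := ((1 + B) ^ N).mulVec x₀ with hy
    set u := ((1 + B) ^ N).mulVec w with hu
    have hypos : ∀ i, 0 < y i := hposvec x₀ hx0 hx₀ne
    have hupos : ∀ i, 0 < u i := hposvec w hw0 hwne
    have hcommB : B * (1 + B) ^ N = (1 + B) ^ N * B :=
      (((Commute.one_right B).add_right (Commute.refl B)).pow_right N).eq
    have hBx : B.mulVec x₀ = ρ • x₀ + w := by rw [hw]; abel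
    have hBy : B.mulVec y = ρ • y + u := by
      calc B.mulVec y = ((1 + B) ^ N).mulVec (B.mulVec x₀) := by
            rw [hy, Matrix.mulVec_mulVec, Matrix.mulVec_mulVec, hcommB]
      _ = ρ • y + u := by rw [hBx, Matrix.mulVec_add, Matrix.mulVec_smul, hy, hu]
    obtain ⟨i₁, -, hi₁⟩ := Finset.exists_min_image Finset.univ (fun i => u i / y i)
      ⟨Classical.arbitrary m, Finset.mem_univ _⟩
    set ε := u i₁ / y i₁ with hε
    have hεpos : 0 < ε := div_pos (hupos i₁) (hypos i₁)
    have hεy : ∀ i, ε * y i ≤ u i := fun i =>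
      (le_div_iff₀ (hypos i)).mp (hi₁ i (Finset.mem_univ i))
    have hstep : ∀ i, (ρ + ε) * y i ≤ B.mulVec y i := by
      intro i
      have := congrFun hBy i
      simp only [Pi.add_apply, Pi.smul_apply, smul_eq_mul] at this
      have h2 := hεy i
      nlinarith
    set s : ℝ := ∑ i, y i with hs
    have hspos : 0 < s := Finset.sum_pos (fun i _ => hypos i) Finset.univ_nonempty
    set x' : m → ℝ := s⁻¹ • y with hx'
    have hmem : (ρ + ε, x') ∈ D := by
      refine ⟨fun i => ?_, ?_, by positivity, fun i => ?_⟩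
      · exact mul_nonneg (by positivity) (hypos i).le
      · simp only [hx', Pi.smul_apply, smul_eq_mul, ← Finset.mul_sum, ← hs]
        exact inv_mul_cancel₀ hspos.ne'
      · have h1 := hstep i
        have : B.mulVec x' i = s⁻¹ * B.mulVec y i := by
          rw [hx', Matrix.mulVec_smul]
          simp [smul_eq_mul]
        rw [this]
        simp only [hx', Pi.smul_apply, smul_eq_mul]
        have hsi : 0 < s⁻¹ := by positivity
        nlinarith
    have := hpmax hmem
    simp only [← hρ] at this
    have : ρ + ε ≤ ρ := this
    linarith
  -- positivity of x₀
  have heigpow : ∀ k : ℕ, ((1 + B) ^ k).mulVec x₀ = ((1 + ρ) ^ k) • x₀ := by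
    intro k
    induction k with
    | zero => simp
    | succ k ih =>
      rw [pow_succ', pow_succ', ← Matrix.mulVec_mulVec, ih, Matrix.mulVec_smul,
        Matrix.add_mulVec, Matrix.one_mulVec, heq]
      ext i
      simp only [Pi.smul_apply, Pi.add_apply, smul_eq_mul]
      ring
  have hx₀pos : ∀ i, 0 < x₀ i := by
    intro i
    have h1 : 0 < ((1 + B) ^ N).mulVec x₀ i := hposvec x₀ hx0 hx₀ne i
    rw [heigpow N] at h1
    simp only [Pi.smul_apply, smul_eq_mul] at h1
    have h2 : 0 < (1 + ρ) ^ N := by positivity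
    nlinarith
  exact ⟨ρ, hρ0, x₀, hx₀pos, heq⟩


theorem exists_perron_irred (B : Matrix m m ℝ) [Nonempty m] (hB : ∀ i j, 0 ≤ B i j)
    (hirr : Irred B) :
    ∃ ρ : ℝ, 0 ≤ ρ ∧ (∃ u, (∀ i, 0 < u i) ∧ B.mulVec u = ρ • u) ∧
      sr B = ENNReal.ofReal ρ := by
  obtain ⟨ρ, hρ0, u, hu, heig⟩ := exists_perron B hB (exists_uniform_pos hB hirr)
  refine ⟨ρ, hρ0, ⟨u, hu, heig⟩, le_antisymm ?_ ?_⟩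
  · exact sr_le B hB u hu ρ fun i => le_of_eq (by rw [heig]; simp [smul_eq_mul])
  · have hune : u ≠ 0 := fun h => by
      have := hu (Classical.arbitrary m); rw [h] at this; simp at this
    have := le_sr B ρ (mem_spectrum_of_eig B ρ u hune heig)
    rwa [abs_of_nonneg hρ0] at this

lemma geom_aux (x : ℝ) (h0 : 0 ≤ x) (h1 : x < 1) (n : ℕ) :
    ∑ i ∈ Finset.range n, x ^ i ≤ (1 - x)⁻¹ := by
  have hg := geom_sum_mul x n
  have hx : (0:ℝ) < 1 - x := by linarith
  have hinv : (1 - x) * (1 - x)⁻¹ = 1 := mul_inv_cancel₀ hx.ne'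
  have hpn : 0 ≤ x ^ n := pow_nonneg h0 n
  have hi : 0 < (1-x)⁻¹ := by positivity
  nlinarith [hg, hinv, hpn, hi]

/-- Solve `(r - B) v = c` by a Neumann series, `r` above the Perron root. -/
theorem solve_block (B : Matrix m m ℝ) [Nonempty m] (hB : ∀ i j, 0 ≤ B i j) (hirr : Irred B)
    (r : ℝ) (hr : (sr B).toReal < r) (c : m → ℝ) (hc : ∀ i, 0 ≤ c i) :
    ∃ v : m → ℝ, (∀ i, 0 ≤ v i) ∧ (∀ i, B.mulVec v i + c i = r * v i) ∧
      ((∃ i, 0 < c i) → ∀ i, 0 < v i) := by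
  obtain ⟨ρ, hρ0, ⟨u, hu, heig⟩, hsr⟩ := exists_perron_irred B hB hirr
  have hρr : ρ < r := by rwa [hsr, ENNReal.toReal_ofReal hρ0] at hr
  have hrpos : 0 < r := lt_of_le_of_lt hρ0 hρr
  obtain ⟨i₂, -, hi₂⟩ := Finset.exists_max_image Finset.univ (fun i => c i / u i)
    ⟨Classical.arbitrary m, Finset.mem_univ _⟩
  set t₀ : ℝ := c i₂ / u i₂ with ht₀def
  have ht₀0 : 0 ≤ t₀ := div_nonneg (hc i₂) (hu i₂).le
  have ht₀ : ∀ i, c i ≤ t₀ * u i := by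
    intro i
    have h1 := hi₂ i (Finset.mem_univ i)
    rw [div_le_iff₀ (hu i)] at h1
    linarith
  have hgknn : ∀ k i, 0 ≤ (B ^ k).mulVec c i := fun k i =>
    Finset.sum_nonneg fun j _ => mul_nonneg (entry_nonneg_pow hB k i j) (hc j)
  have hgk : ∀ k i, (B ^ k).mulVec c i ≤ t₀ * ρ ^ k * u i := by
    intro k
    induction k with
    | zero => intro i; simpa [Matrix.one_mulVec] using ht₀ i
    | succ k ih =>
      intro i
      have h1 : (B ^ (k+1)).mulVec c = B.mulVec ((B ^ k).mulVec c) := by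
        rw [Matrix.mulVec_mulVec, ← pow_succ']
      rw [h1]
      calc B.mulVec ((B ^ k).mulVec c) i ≤ ∑ j, B i j * (t₀ * ρ ^ k * u j) := by
            refine Finset.sum_le_sum fun j _ => mul_le_mul_of_nonneg_left (ih j) (hB i j)
      _ = t₀ * ρ ^ k * B.mulVec u i := by
            rw [Matrix.mulVec, dotProduct, Finset.mul_sum]
            exact Finset.sum_congr rfl fun j _ => by ring
      _ = t₀ * ρ ^ (k+1) * u i := by
            rw [heig]
            simp only [Pi.smul_apply, smul_eq_mul]
            ring
  set s : ℕ → m → ℝ := fun M i => ∑ k ∈ Finset.range M, (B ^ k).mulVec c i / r ^ (k+1)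
    with hsdef
  have hmono : ∀ i, Monotone fun M => s M i := by
    intro i
    refine monotone_nat_of_le_succ fun M => ?_
    rw [hsdef]
    simp only
    rw [Finset.sum_range_succ]
    have : 0 ≤ (B ^ M).mulVec c i / r ^ (M+1) := div_nonneg (hgknn M i) (by positivity)
    linarith
  set K : m → ℝ := fun i => (t₀ * u i / r) * (1 - ρ/r)⁻¹ with hKdef
  have hbdd : ∀ i M, s M i ≤ K i := by
    intro i M
    have hterm : ∀ k, (B ^ k).mulVec c i / r ^ (k+1) ≤ (t₀ * u i / r) * (ρ/r) ^ k := by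
      intro k
      have h1 := hgk k i
      have h2 : (0:ℝ) < r ^ (k+1) := by positivity
      rw [div_le_iff₀ h2]
      have : (t₀ * u i / r) * (ρ/r) ^ k * r ^ (k+1) = t₀ * ρ ^ k * u i := by
        rw [div_pow, pow_succ]
        field_simp
      rw [this]
      exact h1
    calc s M i ≤ ∑ k ∈ Finset.range M, (t₀ * u i / r) * (ρ/r) ^ k :=
          Finset.sum_le_sum fun k _ => hterm k
    _ = (t₀ * u i / r) * ∑ k ∈ Finset.range M, (ρ/r) ^ k := by rw [Finset.mul_sum]
    _ ≤ K i := by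
          rw [hKdef]
          refine mul_le_mul_of_nonneg_left ?_
            (div_nonneg (mul_nonneg ht₀0 (hu i).le) hrpos.le)
          exact geom_aux _ (div_nonneg hρ0 hrpos.le) ((div_lt_one hrpos).mpr hρr) M
  have hbddA : ∀ i, BddAbove (Set.range fun M => s M i) := by
    intro i
    refine ⟨K i, ?_⟩
    rintro x ⟨M, rfl⟩
    exact hbdd i M
  set v : m → ℝ := fun i => ⨆ M, s M i with hvdef
  have htend : ∀ i, Filter.Tendsto (fun M => s M i) Filter.atTop (nhds (v i)) :=
    fun i => tendsto_atTop_ciSup (hmono i) (hbddA i)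
  have hvlb : ∀ M i, s M i ≤ v i := fun M i => le_ciSup (hbddA i) M
  have hv0 : ∀ i, 0 ≤ v i := by
    intro i
    have := hvlb 0 i
    simpa [hsdef] using this
  have hswap : ∀ M i, B.mulVec (s M) i
      = ∑ k ∈ Finset.range M, B.mulVec ((B ^ k).mulVec c) i / r ^ (k+1) := by
    intro M i
    calc B.mulVec (s M) i = ∑ j, B i j * ∑ k ∈ Finset.range M, (B ^ k).mulVec c j / r ^ (k+1) :=
          rfl
    _ = ∑ j, ∑ k ∈ Finset.range M, B i j * (B ^ k).mulVec c j / r ^ (k+1) := by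
          refine Finset.sum_congr rfl fun j _ => ?_
          rw [Finset.mul_sum]
          exact Finset.sum_congr rfl fun k _ => by ring
    _ = ∑ k ∈ Finset.range M, ∑ j, B i j * (B ^ k).mulVec c j / r ^ (k+1) := Finset.sum_comm
    _ = ∑ k ∈ Finset.range M, B.mulVec ((B ^ k).mulVec c) i / r ^ (k+1) := by
          refine Finset.sum_congr rfl fun k _ => ?_
          rw [Matrix.mulVec, dotProduct, Finset.sum_div]
          try exact Finset.sum_congr rfl fun j _ => by ring
  have hrec : ∀ M i, s (M+1) i = (c i + B.mulVec (s M) i) / r := by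
    intro M i
    rw [hswap]
    show ∑ k ∈ Finset.range (M+1), (B ^ k).mulVec c i / r ^ (k+1) = _
    rw [Finset.sum_range_succ']
    simp only [pow_zero, Matrix.one_mulVec, pow_one]
    have hterm : ∀ k, (B ^ (k+1)).mulVec c i / r ^ (k+1+1)
        = B.mulVec ((B ^ k).mulVec c) i / r ^ (k+1) / r := by
      intro k
      rw [Matrix.mulVec_mulVec, ← pow_succ']
      rw [div_div, ← pow_succ]
    rw [Finset.sum_congr rfl fun k _ => hterm k, ← Finset.sum_div, add_div]
    norm_num
    try ring
  have heqn : ∀ i, B.mulVec v i + c i = r * v i := by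
    intro i
    have hL : Filter.Tendsto (fun M => s (M+1) i) Filter.atTop (nhds (v i)) :=
      (htend i).comp (Filter.tendsto_add_atTop_nat 1)
    have hR : Filter.Tendsto (fun M => (c i + B.mulVec (s M) i) / r) Filter.atTop
        (nhds ((c i + B.mulVec v i) / r)) := by
      refine Filter.Tendsto.div_const ?_ r
      refine Filter.Tendsto.const_add _ ?_
      have : ∀ M, B.mulVec (s M) i = ∑ j, B i j * s M j := fun M => rfl
      simp only [this]
      have : B.mulVec v i = ∑ j, B i j * v j := rfl
      rw [this]
      exact tendsto_finset_sum _ fun j _ => (htend j).const_mul _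
    have huniq : v i = (c i + B.mulVec v i) / r := by
      have hfun : (fun M => s (M+1) i) = fun M => (c i + B.mulVec (s M) i) / r :=
        funext fun M => hrec M i
      exact tendsto_nhds_unique (hfun ▸ hL) hR
    rw [eq_div_iff hrpos.ne'] at huniq
    linarith
  refine ⟨v, hv0, heqn, ?_⟩
  rintro ⟨j₀, hj₀⟩ i
  obtain ⟨k, hk⟩ := exists_pow_pos hB (hirr i j₀)
  have h1 : (B ^ k) i j₀ * c j₀ ≤ (B ^ k).mulVec c i :=
    Finset.single_le_sum (f := fun j => (B ^ k) i j * c j)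
      (fun j _ => mul_nonneg (entry_nonneg_pow hB k i j) (hc j)) (Finset.mem_univ j₀)
  have h2 : 0 < (B ^ k).mulVec c i / r ^ (k+1) := by
    apply div_pos (lt_of_lt_of_le (mul_pos hk hj₀) h1) (by positivity)
  have h3 : (B ^ k).mulVec c i / r ^ (k+1) ≤ s (k+1) i := by
    refine Finset.single_le_sum (f := fun l => (B ^ l).mulVec c i / r ^ (l+1))
      (fun l _ => div_nonneg (hgknn l i) (by positivity))
      (Finset.mem_range.mpr (Nat.lt_succ_self k))
  exact lt_of_lt_of_le h2 (le_trans h3 (hvlb (k+1) i))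

end core

section MainAux
variable {n : Type*} [Fintype n] [DecidableEq n]

theorem construct_aux (N : ℕ) (F : Matrix n n ℝ) (hF : ∀ i j, 0 ≤ F i j) (r : ℝ) :
    ∀ D : Finset n, D.card ≤ N → (∀ j ∈ D, ∀ k, F j k ≠ 0 → k ∈ D) →
    (∀ i ∈ D, IsFinal F i → (sr (compMatrix F i)).toReal = r) →
    (∀ i ∈ D, ¬ IsFinal F i → (sr (compMatrix F i)).toReal < r) →
    ∃ v : n → ℝ, (∀ j ∈ D, 0 < v j) ∧ (∀ j ∉ D, v j = 0) ∧
      (∀ j ∈ D, ∑ k, F j k * v k = r * v j) := by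
  induction N with
  | zero =>
    intro D hcard _ _ _
    have hD : D = ∅ := Finset.card_eq_zero.mp (Nat.le_zero.mp hcard)
    subst hD
    exact ⟨0, by simp, by simp, by simp⟩
  | succ N ih =>
    intro D hcard hDC H1 H2
    by_cases hD : D.Nonempty
    swap
    · rw [Finset.not_nonempty_iff_eq_empty] at hD
      subst hD
      exact ⟨0, by simp, by simp, by simp⟩
    obtain ⟨i₀, hi₀D, hmax⟩ := exists_rel_maximal (fun a b => Reach F b a)
      (fun a b c hab hbc => reach_trans hbc hab) D hD
    set p : n → Prop := fun k => SameComp F i₀ k with hp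
    set C : Finset n := Finset.univ.filter p with hC
    have hCD : ∀ k ∈ C, k ∈ D := by
      intro k hk
      rw [hC, Finset.mem_filter] at hk
      exact reach_closed hDC hk.2.1 hi₀D
    have hi₀C : i₀ ∈ C := by rw [hC, Finset.mem_filter]; exact ⟨Finset.mem_univ _, sameComp_refl F i₀⟩
    set D' : Finset n := D \ C with hD'
    have hD'ss : D' ⊂ D := by
      refine Finset.sdiff_ssubset ?_ ?_ <;>
        [skip; exact ⟨i₀, hi₀C⟩]
      intro k hk; exact hCD k hk
    have hcard' : D'.card ≤ N := by
      have := Finset.card_lt_card hD'ss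
      omega
    -- D' is downward closed
    have hnoexit : ∀ j ∈ D', ∀ k ∈ C, F j k = 0 := by
      intro j hj k hk
      by_contra hjk
      rw [hC, Finset.mem_filter] at hk
      have hji₀ : Reach F j i₀ :=
        reach_trans (Relation.ReflTransGen.single hjk) hk.2.2
      have hij : Reach F i₀ j := hmax j (Finset.mem_sdiff.mp hj).1 hji₀
      have : j ∈ C := by rw [hC, Finset.mem_filter]; exact ⟨Finset.mem_univ _, hij, hji₀⟩
      exact (Finset.mem_sdiff.mp hj).2 this
    have hD'C : ∀ j ∈ D', ∀ k, F j k ≠ 0 → k ∈ D' := by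
      intro j hj k hjk
      rw [Finset.mem_sdiff]
      refine ⟨hDC j (Finset.mem_sdiff.mp hj).1 k hjk, fun hkC => ?_⟩
      exact hjk (hnoexit j hj k hkC)
    obtain ⟨v', hv'pos, hv'zero, hv'row⟩ := ih D' hcard'
      hD'C (fun i hi => H1 i (Finset.mem_sdiff.mp hi).1) (fun i hi => H2 i (Finset.mem_sdiff.mp hi).1)
    have hv'nn : ∀ k, 0 ≤ v' k := by
      intro k
      by_cases hk : k ∈ D'
      · exact (hv'pos k hk).le
      · rw [hv'zero k hk]
    -- block setup
    haveI : Nonempty {j // SameComp F i₀ j} := ⟨⟨i₀, sameComp_refl F i₀⟩⟩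
    set B := compMatrix F i₀ with hBdef
    have hBnn : ∀ a b, 0 ≤ B a b := fun a b => hF a.val b.val
    have hBirr : Irred B := irred_compMatrix F i₀
    set c : {j // SameComp F i₀ j} → ℝ :=
      fun a => ∑ k ∈ Finset.univ.filter (fun k => ¬ p k), F a.val k * v' k with hcdef
    have hcnn : ∀ a, 0 ≤ c a := fun a =>
      Finset.sum_nonneg fun k _ => mul_nonneg (hF _ _) (hv'nn k)
    -- obtain the block solution w with: B.mulVec w a + c a = r * w a, w positive
    have hw : ∃ w : {j // SameComp F i₀ j} → ℝ, (∀ a, 0 < w a) ∧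
        ∀ a, B.mulVec w a + c a = r * w a := by
      by_cases hfin : IsFinal F i₀
      · -- c = 0 and use the Perron vector
        obtain ⟨ρ, hρ0, ⟨u, hu, heig⟩, hsr⟩ := exists_perron_irred B hBnn hBirr
        have hρr : ρ = r := by
          have := H1 i₀ hi₀D hfin
          rw [← hBdef, hsr, ENNReal.toReal_ofReal hρ0] at this
          exact this
        have hczero : ∀ a, c a = 0 := by
          intro a
          refine Finset.sum_eq_zero fun k hk => ?_
          rw [Finset.mem_filter] at hk
          have : F a.val k = 0 := by
            by_contra hne
            have h1 : Reach F i₀ k := reach_trans a.2.1 (Relation.ReflTransGen.single hne)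
            exact hk.2 ⟨h1, hfin k h1⟩
          rw [this, zero_mul]
        refine ⟨u, hu, fun a => ?_⟩
        rw [hczero a, add_zero, heig, hρr]
        simp [smul_eq_mul]
      · have hlt : (sr B).toReal < r := H2 i₀ hi₀D hfin
        obtain ⟨w, hw0, heqn, hwpos⟩ := solve_block B hBnn hBirr r hlt c hcnn
        obtain ⟨a₀, b₀, ha₀, hedge, hnb₀⟩ := exists_exit_edge hfin
        have hb₀D : b₀ ∈ D := hDC a₀ (hCD a₀ (by rw [hC, Finset.mem_filter]; exact ⟨Finset.mem_univ _, ha₀⟩)) b₀ hedge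
        have hb₀D' : b₀ ∈ D' := Finset.mem_sdiff.mpr ⟨hb₀D, by
          rw [hC, Finset.mem_filter]; rintro ⟨-, hs⟩; exact hnb₀ hs⟩
        have hcpos : 0 < c ⟨a₀, ha₀⟩ := by
          rw [hcdef]
          have hterm : 0 < F a₀ b₀ * v' b₀ :=
            mul_pos (lt_of_le_of_ne (hF a₀ b₀) (Ne.symm hedge)) (hv'pos b₀ hb₀D')
          refine lt_of_lt_of_le hterm ?_
          refine Finset.single_le_sum (f := fun k => F a₀ k * v' k)
            (fun k _ => mul_nonneg (hF _ _) (hv'nn k)) ?_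
          rw [Finset.mem_filter]
          exact ⟨Finset.mem_univ _, hnb₀⟩
        exact ⟨w, hwpos ⟨⟨a₀, ha₀⟩, hcpos⟩, heqn⟩
    obtain ⟨w, hwpos, hweqn⟩ := hw
    -- assemble
    set v : n → ℝ := fun k => if h : SameComp F i₀ k then w ⟨k, h⟩ else v' k with hvdef
    have hvC : ∀ k (h : SameComp F i₀ k), v k = w ⟨k, h⟩ := fun k h => dif_pos h
    have hvnC : ∀ k, ¬ SameComp F i₀ k → v k = v' k := fun k h => dif_neg h
    refine ⟨v, ?_, ?_, ?_⟩
    · intro j hj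
      by_cases h : SameComp F i₀ j
      · rw [hvC j h]; exact hwpos _
      · rw [hvnC j h]
        refine hv'pos j (Finset.mem_sdiff.mpr ⟨hj, ?_⟩)
        rw [hC, Finset.mem_filter]
        rintro ⟨-, hs⟩; exact h hs
    · intro j hj
      have hjC : ¬ SameComp F i₀ j := fun h =>
        hj (hCD j (by rw [hC, Finset.mem_filter]; exact ⟨Finset.mem_univ _, h⟩))
      rw [hvnC j hjC]
      exact hv'zero j (fun hD'' => hj (Finset.mem_sdiff.mp hD'').1)
    · intro j hj
      by_cases h : SameComp F i₀ j
      · -- row within C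
        have hsplit := Finset.sum_filter_add_sum_filter_not Finset.univ p (fun k => F j k * v k)
        have h1 : ∑ k ∈ Finset.univ.filter p, F j k * v k = B.mulVec w ⟨j, h⟩ := by
          rw [Finset.sum_subtype (p := p) (Finset.univ.filter p)
            (fun x => by simp [hp]) (fun k => F j k * v k)]
          refine Finset.sum_congr rfl fun a _ => ?_
          rw [hvC a.val a.2]
          rfl
        have h2 : ∑ k ∈ Finset.univ.filter (fun k => ¬ p k), F j k * v k = c ⟨j, h⟩ := by
          rw [hcdef]
          refine Finset.sum_congr rfl fun k hk => ?_
          rw [Finset.mem_filter] at hk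
          rw [hvnC k hk.2]
        rw [← hsplit, h1, h2, hweqn ⟨j, h⟩, hvC j h]
      · -- row within D'
        have hjD' : j ∈ D' := Finset.mem_sdiff.mpr ⟨hj, by
          rw [hC, Finset.mem_filter]; rintro ⟨-, hs⟩; exact h hs⟩
        have hterm : ∀ k, F j k * v k = F j k * v' k := by
          intro k
          by_cases hk : SameComp F i₀ k
          · have : F j k = 0 := hnoexit j hjD' k (by rw [hC, Finset.mem_filter]; exact ⟨Finset.mem_univ _, hk⟩)
            rw [this, zero_mul, zero_mul]
          · rw [hvnC k hk]
        rw [Finset.sum_congr rfl fun k _ => hterm k, hv'row j hjD', hvnC j h]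

lemma reach_closed2 {F : Matrix n n ℝ} {m₀ : n} {S : Finset n}
    (h4 : ∀ j ∈ S, ∀ k, F j k ≠ 0 → Reach F k m₀ → k ∈ S)
    {a b : n} (hab : Reach F a b) (ha : a ∈ S) (hbm : Reach F b m₀) : b ∈ S := by
  induction hab with
  | refl => exact ha
  | @tail c b hac hedge ih =>
    have hcm : Reach F c m₀ := reach_trans (Relation.ReflTransGen.single hedge) hbm
    exact h4 c (ih hcm) b hedge hbm

theorem construct2_aux (N : ℕ) (F : Matrix n n ℝ) (hF : ∀ i j, 0 ≤ F i j) (m₀ : n)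
    (hst : ∀ j, Reach F j m₀ → ¬ SameComp F m₀ j →
      (sr (compMatrix F j)).toReal < (sr (compMatrix F m₀)).toReal) :
    ∀ S : Finset n, S.card ≤ N →
    (∀ j ∈ S, Reach F j m₀) →
    (∀ j, SameComp F m₀ j → j ∈ S) →
    (∀ j ∈ S, ∀ k, F j k ≠ 0 → Reach F k m₀ → k ∈ S) →
    ∃ x : n → ℝ, (∀ k, 0 ≤ x k) ∧ (∀ k, SameComp F m₀ k → 0 < x k) ∧ (∀ k ∉ S, x k = 0) ∧
      (∀ j ∈ S, ∑ k, F j k * x k = (sr (compMatrix F m₀)).toReal * x j) := by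
  set ρβ := (sr (compMatrix F m₀)).toReal with hρβ
  induction N with
  | zero =>
    intro S hcard h2 h3 h4
    have hS : S = ∅ := Finset.card_eq_zero.mp (Nat.le_zero.mp hcard)
    exact absurd (hS ▸ h3 m₀ (sameComp_refl F m₀)) (by simp)
  | succ N ih =>
    intro S hcard h2 h3 h4
    by_cases hex : ∃ j ∈ S, ¬ SameComp F m₀ j
    · -- peel a maximal non-base class
      obtain ⟨j', hj'S, hj'ne⟩ := hex
      have hSne : S.Nonempty := ⟨j', hj'S⟩
      obtain ⟨i₁, hi₁S, hmax⟩ := exists_rel_maximal (fun a b => Reach F b a)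
        (fun a b c hab hbc => reach_trans hbc hab) S hSne
      have hni₁ : ¬ SameComp F m₀ i₁ := by
        intro hsame
        have hj'i₁ : Reach F j' i₁ := reach_trans (h2 j' hj'S) hsame.1
        have hi₁j' : Reach F i₁ j' := hmax j' hj'S hj'i₁
        exact hj'ne ⟨reach_trans hsame.1 hi₁j', h2 j' hj'S⟩
      set q : n → Prop := fun k => SameComp F i₁ k with hq
      set G : Finset n := Finset.univ.filter q with hG
      have hGS : ∀ k ∈ G, k ∈ S := by
        intro k hk
        rw [hG, Finset.mem_filter] at hk
        refine reach_closed2 h4 hk.2.1 hi₁S ?_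
        exact reach_trans hk.2.2 (h2 i₁ hi₁S)
      have hi₁G : i₁ ∈ G := by
        rw [hG, Finset.mem_filter]; exact ⟨Finset.mem_univ _, sameComp_refl F i₁⟩
      set S' : Finset n := S \ G with hS'
      have hcard' : S'.card ≤ N := by
        have : S' ⊂ S := Finset.sdiff_ssubset (fun k hk => hGS k hk) ⟨i₁, hi₁G⟩
        have := Finset.card_lt_card this
        omega
      have hnoexit : ∀ j ∈ S', ∀ k ∈ G, F j k = 0 := by
        intro j hj k hk
        by_contra hjk
        rw [hG, Finset.mem_filter] at hk
        have hji₁ : Reach F j i₁ :=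
          reach_trans (Relation.ReflTransGen.single hjk) hk.2.2
        have hij : Reach F i₁ j := hmax j (Finset.mem_sdiff.mp hj).1 hji₁
        exact (Finset.mem_sdiff.mp hj).2
          (by rw [hG, Finset.mem_filter]; exact ⟨Finset.mem_univ _, hij, hji₁⟩)
      have h2' : ∀ j ∈ S', Reach F j m₀ := fun j hj => h2 j (Finset.mem_sdiff.mp hj).1
      have h3' : ∀ j, SameComp F m₀ j → j ∈ S' := by
        intro j hjc
        refine Finset.mem_sdiff.mpr ⟨h3 j hjc, fun hjG => ?_⟩
        rw [hG, Finset.mem_filter] at hjG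
        exact hni₁ ⟨reach_trans hjc.1 hjG.2.2, reach_trans hjG.2.1 hjc.2⟩
      have h4' : ∀ j ∈ S', ∀ k, F j k ≠ 0 → Reach F k m₀ → k ∈ S' := by
        intro j hj k hjk hkm
        refine Finset.mem_sdiff.mpr ⟨h4 j (Finset.mem_sdiff.mp hj).1 k hjk hkm, fun hkG => ?_⟩
        exact hjk (hnoexit j hj k hkG)
      obtain ⟨x', hx'nn, hx'pos, hx'zero, hx'row⟩ := ih S' hcard' h2' h3' h4'
      -- solve on the class of i₁
      haveI : Nonempty {j // SameComp F i₁ j} := ⟨⟨i₁, sameComp_refl F i₁⟩⟩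
      set B := compMatrix F i₁ with hBdef
      have hBnn : ∀ a b, 0 ≤ B a b := fun a b => hF a.val b.val
      have hBirr : Irred B := irred_compMatrix F i₁
      have hlt : (sr B).toReal < ρβ := hst i₁ (h2 i₁ hi₁S) hni₁
      set c : {j // SameComp F i₁ j} → ℝ :=
        fun a => ∑ k ∈ Finset.univ.filter (fun k => ¬ q k), F a.val k * x' k with hcdef
      have hcnn : ∀ a, 0 ≤ c a := fun a =>
        Finset.sum_nonneg fun k _ => mul_nonneg (hF _ _) (hx'nn k)
      obtain ⟨w, hw0, heqn, -⟩ := solve_block B hBnn hBirr ρβ hlt c hcnn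
      set x : n → ℝ := fun k => if h : SameComp F i₁ k then w ⟨k, h⟩ else x' k with hxdef
      have hxG : ∀ k (h : SameComp F i₁ k), x k = w ⟨k, h⟩ := fun k h => dif_pos h
      have hxnG : ∀ k, ¬ SameComp F i₁ k → x k = x' k := fun k h => dif_neg h
      refine ⟨x, ?_, ?_, ?_, ?_⟩
      · intro k
        by_cases h : SameComp F i₁ k
        · rw [hxG k h]; exact hw0 _
        · rw [hxnG k h]; exact hx'nn k
      · intro k hk
        have hkG : ¬ SameComp F i₁ k := by
          intro hsame
          exact hni₁ ⟨reach_trans hk.1 hsame.2, reach_trans hsame.1 hk.2⟩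
        rw [hxnG k hkG]
        exact hx'pos k hk
      · intro k hk
        have hkG : ¬ SameComp F i₁ k := fun h =>
          hk (hGS k (by rw [hG, Finset.mem_filter]; exact ⟨Finset.mem_univ _, h⟩))
        rw [hxnG k hkG]
        refine hx'zero k (fun hk' => hk (Finset.mem_sdiff.mp hk').1)
      · intro j hj
        by_cases h : SameComp F i₁ j
        · have hsplit := Finset.sum_filter_add_sum_filter_not Finset.univ q (fun k => F j k * x k)
          have hA : ∑ k ∈ Finset.univ.filter q, F j k * x k = B.mulVec w ⟨j, h⟩ := by
            rw [Finset.sum_subtype (p := q) (Finset.univ.filter q)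
              (fun y => by simp [hq]) (fun k => F j k * x k)]
            refine Finset.sum_congr rfl fun a _ => ?_
            rw [hxG a.val a.2]
            rfl
          have hBc : ∑ k ∈ Finset.univ.filter (fun k => ¬ q k), F j k * x k = c ⟨j, h⟩ := by
            rw [hcdef]
            refine Finset.sum_congr rfl fun k hk => ?_
            rw [Finset.mem_filter] at hk
            rw [hxnG k hk.2]
          rw [← hsplit, hA, hBc, heqn ⟨j, h⟩, hxG j h]
        · have hjS' : j ∈ S' := Finset.mem_sdiff.mpr ⟨hj, by
            rw [hG, Finset.mem_filter]; rintro ⟨-, hs⟩; exact h hs⟩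
          have hterm : ∀ k, F j k * x k = F j k * x' k := by
            intro k
            by_cases hk : SameComp F i₁ k
            · have : F j k = 0 := hnoexit j hjS' k
                (by rw [hG, Finset.mem_filter]; exact ⟨Finset.mem_univ _, hk⟩)
              rw [this, zero_mul, zero_mul]
            · rw [hxnG k hk]
          rw [Finset.sum_congr rfl fun k _ => hterm k, hx'row j hjS', hxnG j h]
    · -- base case: S is exactly the class of m₀
      push_neg at hex
      haveI : Nonempty {j // SameComp F m₀ j} := ⟨⟨m₀, sameComp_refl F m₀⟩⟩
      obtain ⟨ρ, hρ0, ⟨u, hu, heig⟩, hsr⟩ :=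
        exists_perron_irred (compMatrix F m₀) (fun a b => hF a.val b.val)
          (irred_compMatrix F m₀)
      have hρr : ρ = ρβ := by rw [hρβ, hsr, ENNReal.toReal_ofReal hρ0]
      refine ⟨fun k => if h : SameComp F m₀ k then u ⟨k, h⟩ else 0, fun k => ?_,
        fun k hk => ?_, fun k hk => ?_, fun j hj => ?_⟩
      · dsimp only
        by_cases h : SameComp F m₀ k
        · rw [dif_pos h]; exact (hu _).le
        · rw [dif_neg h]
      · dsimp only
        rw [dif_pos hk]; exact hu _
      · dsimp only
        rw [dif_neg (fun h => hk (h3 k h))]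
      · dsimp only
        have hjc : SameComp F m₀ j := hex j hj
        have hsplit := Finset.sum_filter_add_sum_filter_not Finset.univ
          (fun k => SameComp F m₀ k)
          (fun k => F j k * if h : SameComp F m₀ k then u ⟨k, h⟩ else 0)
        rw [← hsplit]
        have hA : ∑ k ∈ Finset.univ.filter (fun k => SameComp F m₀ k),
            (F j k * if h : SameComp F m₀ k then u ⟨k, h⟩ else 0)
            = (compMatrix F m₀).mulVec u ⟨j, hjc⟩ := by
          rw [Finset.sum_subtype (p := fun k => SameComp F m₀ k) _ (fun y => by simp) _]
          refine Finset.sum_congr rfl fun a _ => ?_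
          rw [dif_pos a.2]
          rfl
        have hB0 : ∑ k ∈ Finset.univ.filter (fun k => ¬ SameComp F m₀ k),
            (F j k * if h : SameComp F m₀ k then u ⟨k, h⟩ else 0) = 0 := by
          refine Finset.sum_eq_zero fun k hk => ?_
          rw [Finset.mem_filter] at hk
          rw [dif_neg hk.2, mul_zero]
        rw [hA, hB0, add_zero, heig, dif_pos hjc]
        simp only [Pi.smul_apply, smul_eq_mul]
        rw [hρr]

/-- general nonnegative eigenvector for the "distinguished" class of m₀ -/
theorem gpf (F : Matrix n n ℝ) (hF : ∀ i j, 0 ≤ F i j) (m₀ : n)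
    (hst : ∀ j, Reach F j m₀ → ¬ SameComp F m₀ j →
      (sr (compMatrix F j)).toReal < (sr (compMatrix F m₀)).toReal) :
    ∃ x : n → ℝ, x ≠ 0 ∧ F.mulVec x = (sr (compMatrix F m₀)).toReal • x := by
  set S : Finset n := Finset.univ.filter (fun j => Reach F j m₀) with hS
  have hmem : ∀ j, j ∈ S ↔ Reach F j m₀ := fun j => by
    rw [hS, Finset.mem_filter]; simp
  obtain ⟨x, hxnn, hxpos, hxzero, hxrow⟩ := construct2_aux S.card F hF m₀ hst S le_rfl
    (fun j hj => (hmem j).mp hj)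
    (fun j hjc => (hmem j).mpr hjc.2)
    (fun j hj k hjk hkm => (hmem k).mpr hkm)
  refine ⟨x, ?_, ?_⟩
  · intro h0
    have := hxpos m₀ (sameComp_refl F m₀)
    rw [h0] at this
    simp at this
  · funext j
    by_cases hj : j ∈ S
    · have := hxrow j hj
      simpa [Matrix.mulVec, dotProduct, Pi.smul_apply, smul_eq_mul] using this
    · have hxj : x j = 0 := hxzero j hj
      have hrow0 : ∑ k, F j k * x k = 0 := by
        refine Finset.sum_eq_zero fun k _ => ?_
        by_cases hFjk : F j k = 0
        · rw [hFjk, zero_mul]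
        · have hxk : x k = 0 := by
            refine hxzero k fun hkS => hj ?_
            rw [hmem]
            exact reach_trans (Relation.ReflTransGen.single hFjk) ((hmem k).mp hkS)
          rw [hxk, mul_zero]
      show F.mulVec x j = _
      simp only [Matrix.mulVec, dotProduct] at hrow0 ⊢
      rw [hrow0, Pi.smul_apply, smul_eq_mul, hxj, mul_zero]


section BlockLt
variable {m : Type*} [Fintype m] [DecidableEq m]
/-- strict subinvariance at one point forces the Perron root below r -/
theorem block_lt (B : Matrix m m ℝ) [Nonempty m] (hB : ∀ i j, 0 ≤ B i j) (hirr : Irred B)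
    (v : m → ℝ) (hv : ∀ i, 0 < v i) (r : ℝ)
    (hsub : ∀ a, B.mulVec v a ≤ r * v a) (a₀ : m) (hstrict : B.mulVec v a₀ < r * v a₀) :
    (sr B).toReal < r := by
  obtain ⟨ρ, hρ0, ⟨u, hu, heig⟩, hsr⟩ := exists_perron_irred B hB hirr
  rw [hsr, ENNReal.toReal_ofReal hρ0]
  by_contra hcon
  push_neg at hcon  -- r ≤ ρ
  obtain ⟨k₀, -, hk₀⟩ := Finset.exists_min_image Finset.univ (fun k => v k / u k)
    ⟨Classical.arbitrary m, Finset.mem_univ _⟩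
  set t := v k₀ / u k₀ with htdef
  have htpos : 0 < t := div_pos (hv k₀) (hu k₀)
  have htle : ∀ k, t * u k ≤ v k := by
    intro k
    have h1 := hk₀ k (Finset.mem_univ k)
    rw [le_div_iff₀ (hu k)] at h1
    linarith
  have hteq : v k₀ = t * u k₀ := by
    rw [htdef, div_mul_cancel₀ _ (hu k₀).ne']
  -- propagate equality along reachability
  have hprop : ∀ b, Relation.ReflTransGen (fun a b => B a b ≠ 0) k₀ b → v b = t * u b := by
    intro b hb
    induction hb with
    | refl => exact hteq
    | @tail c b hkc hedge ih =>
      -- equality chain at row c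
      have hrow : B.mulVec (fun k => t * u k) c = t * (ρ * u c) := by
        have h1 : B.mulVec (fun k => t * u k) c = t * B.mulVec u c := by
          simp only [Matrix.mulVec, dotProduct, Finset.mul_sum]
          exact Finset.sum_congr rfl fun k _ => by ring
        rw [h1]
        have := congrFun heig c
        simp only [Pi.smul_apply, smul_eq_mul] at this
        rw [this]
      have hle1 : B.mulVec (fun k => t * u k) c ≤ B.mulVec v c :=
        Finset.sum_le_sum fun k _ => mul_le_mul_of_nonneg_left (htle k) (hB c k)
      have hchain : B.mulVec v c = B.mulVec (fun k => t * u k) c := by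
        have h2 := hsub c
        have h3 : r * v c = r * (t * u c) := by rw [ih]
        have h4 : r * (t * u c) ≤ ρ * (t * u c) :=
          mul_le_mul_of_nonneg_right hcon (mul_nonneg htpos.le (hu c).le)
        have h5 : t * (ρ * u c) = ρ * (t * u c) := by ring
        linarith [hrow ▸ hle1]
      have hzero : ∑ k, B c k * (v k - t * u k) = 0 := by
        have : ∑ k, B c k * (v k - t * u k) = B.mulVec v c - B.mulVec (fun k => t * u k) c := by
          simp only [Matrix.mulVec, dotProduct, ← Finset.sum_sub_distrib]
          exact Finset.sum_congr rfl fun k _ => by ring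
        rw [this, hchain, sub_self]
      have hzb := (Finset.sum_eq_zero_iff_of_nonneg fun k _ =>
        mul_nonneg (hB c k) (by linarith [htle k])).mp hzero b (Finset.mem_univ b)
      have hBcb : 0 < B c b := lt_of_le_of_ne (hB c b) (Ne.symm hedge)
      have : v b - t * u b = 0 := by
        rcases mul_eq_zero.mp hzb with h | h
        · exact absurd h hBcb.ne'
        · exact h
      linarith
  -- contradiction at a₀
  have hva₀ : v a₀ = t * u a₀ := hprop a₀ (hirr k₀ a₀)
  have hrow : B.mulVec (fun k => t * u k) a₀ = t * (ρ * u a₀) := by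
    have h1 : B.mulVec (fun k => t * u k) a₀ = t * B.mulVec u a₀ := by
      simp only [Matrix.mulVec, dotProduct, Finset.mul_sum]
      exact Finset.sum_congr rfl fun k _ => by ring
    rw [h1]
    have := congrFun heig a₀
    simp only [Pi.smul_apply, smul_eq_mul] at this
    rw [this]
  have hle1 : B.mulVec (fun k => t * u k) a₀ ≤ B.mulVec v a₀ :=
    Finset.sum_le_sum fun k _ => mul_le_mul_of_nonneg_left (htle k) (hB a₀ k)
  have h4 : r * (t * u a₀) ≤ ρ * (t * u a₀) :=
    mul_le_mul_of_nonneg_right hcon (mul_nonneg htpos.le (hu a₀).le)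
  rw [hva₀] at hstrict
  have h5 : t * (ρ * u a₀) = ρ * (t * u a₀) := by ring
  linarith [hrow ▸ hle1]

end BlockLt

theorem backward (F : Matrix n n ℝ) (hF : ∀ i j, 0 ≤ F i j) (v : n → ℝ) (hv : ∀ i, 0 < v i)
    (heig : F.mulVec v = (sr F).toReal • v) (i : n) : IsBasic F i ↔ IsFinal F i := by
  haveI : Nonempty n := ⟨i⟩
  set r := (sr F).toReal with hrdef
  have hr0 : 0 ≤ r := ENNReal.toReal_nonneg
  have hvne : v ≠ 0 := fun h => by
    have := hv i; rw [h] at this; simp at this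
  have hrow : ∀ j, ∑ k, F j k * v k = r * v j := fun j => by
    have := congrFun heig j
    simpa [Matrix.mulVec, dotProduct, Pi.smul_apply, smul_eq_mul] using this
  have hsrF : sr F = ENNReal.ofReal r := by
    refine le_antisymm (sr_le F hF v hv r fun j => le_of_eq (hrow j)) ?_
    have h1 := le_sr F r (mem_spectrum_of_eig F r v hvne heig)
    rwa [abs_of_nonneg hr0] at h1
  haveI : Nonempty {j // SameComp F i j} := ⟨⟨i, sameComp_refl F i⟩⟩
  set B := compMatrix F i with hBdef
  have hBnn : ∀ a b, 0 ≤ B a b := fun a b => hF a.val b.val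
  have hBirr : Irred B := irred_compMatrix F i
  set vκ : {j // SameComp F i j} → ℝ := fun a => v a.val with hvκ
  have hvκpos : ∀ a, 0 < vκ a := fun a => hv a.val
  -- block row sums
  have hbrow : ∀ a : {j // SameComp F i j},
      B.mulVec vκ a + (∑ k ∈ Finset.univ.filter (fun k => ¬ SameComp F i k), F a.val k * v k)
      = r * v a.val := by
    intro a
    have hsplit := Finset.sum_filter_add_sum_filter_not Finset.univ (fun k => SameComp F i k)
      (fun k => F a.val k * v k)
    have hA : ∑ k ∈ Finset.univ.filter (fun k => SameComp F i k), F a.val k * v k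
        = B.mulVec vκ a := by
      rw [Finset.sum_subtype (p := fun k => SameComp F i k) _ (fun y => by simp) _]
      rfl
    rw [← hrow a.val, ← hsplit, hA]
  have htail_nn : ∀ a : {j // SameComp F i j},
      0 ≤ ∑ k ∈ Finset.univ.filter (fun k => ¬ SameComp F i k), F a.val k * v k := fun a =>
    Finset.sum_nonneg fun k _ => mul_nonneg (hF _ _) (hv k).le
  have hsub : ∀ a, B.mulVec vκ a ≤ r * vκ a := fun a => by
    have := hbrow a
    have := htail_nn a
    simp only [hvκ]
    linarith
  by_cases hfin : IsFinal F i
  · refine iff_of_true ?_ hfin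
    -- rows are exact on the block
    have hexact : ∀ a, B.mulVec vκ a = r * vκ a := by
      intro a
      have htail : ∑ k ∈ Finset.univ.filter (fun k => ¬ SameComp F i k), F a.val k * v k = 0 := by
        refine Finset.sum_eq_zero fun k hk => ?_
        rw [Finset.mem_filter] at hk
        have : F a.val k = 0 := by
          by_contra hne
          have h1 : Reach F i k := reach_trans a.2.1 (Relation.ReflTransGen.single hne)
          exact hk.2 ⟨h1, hfin k h1⟩
        rw [this, zero_mul]
      have := hbrow a
      rw [htail, add_zero] at this
      exact this
    have hvκne : vκ ≠ 0 := fun h => by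
      have := hvκpos ⟨i, sameComp_refl F i⟩; rw [h] at this; simp at this
    have heigB : B.mulVec vκ = r • vκ := funext fun a => by
      rw [hexact a]; simp [smul_eq_mul]
    have h1 : sr B ≤ ENNReal.ofReal r := sr_le B hBnn vκ hvκpos r fun a => le_of_eq (hexact a)
    have h2 : ENNReal.ofReal r ≤ sr B := by
      have := le_sr B r (mem_spectrum_of_eig B r vκ hvκne heigB)
      rwa [abs_of_nonneg hr0] at this
    rw [IsBasic, ← hBdef, le_antisymm h1 h2, hsrF]
  · refine iff_of_false ?_ hfin
    obtain ⟨a₀, b₀, ha₀, hedge, hnb₀⟩ := exists_exit_edge hfin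
    have hstrict : B.mulVec vκ ⟨a₀, ha₀⟩ < r * vκ ⟨a₀, ha₀⟩ := by
      have h1 := hbrow ⟨a₀, ha₀⟩
      have h2 : 0 < F a₀ b₀ * v b₀ :=
        mul_pos (lt_of_le_of_ne (hF a₀ b₀) (Ne.symm hedge)) (hv b₀)
      have h3 : F a₀ b₀ * v b₀ ≤
          ∑ k ∈ Finset.univ.filter (fun k => ¬ SameComp F i k), F a₀ k * v k := by
        refine Finset.single_le_sum (f := fun k => F a₀ k * v k)
          (fun k _ => mul_nonneg (hF _ _) (hv k).le) ?_
        rw [Finset.mem_filter]; exact ⟨Finset.mem_univ _, hnb₀⟩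
      simp only [hvκ]
      linarith
    have hlt : (sr B).toReal < r := block_lt B hBnn hBirr vκ hvκpos r hsub ⟨a₀, ha₀⟩ hstrict
    intro hbasic
    rw [IsBasic, ← hBdef, hsrF] at hbasic
    rw [hbasic, ENNReal.toReal_ofReal hr0] at hlt
    exact lt_irrefl r hlt

theorem forward (F : Matrix n n ℝ) (hF : ∀ i j, 0 ≤ F i j)
    (H : ∀ i, IsBasic F i ↔ IsFinal F i) :
    ∃ v : n → ℝ, (∀ i, 0 < v i) ∧ F.mulVec v = (sr F).toReal • v := by
  by_cases hne : Nonempty n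
  swap
  · refine ⟨fun _ => 1, fun i => absurd ⟨i⟩ hne, funext fun i => absurd ⟨i⟩ hne⟩
  haveI := hne
  set r := (sr F).toReal with hrdef
  -- a final class exists
  obtain ⟨i₀, -, hmax₀⟩ := exists_rel_maximal (Reach F)
    (fun a b c => reach_trans) Finset.univ Finset.univ_nonempty
  have hfin₀ : IsFinal F i₀ := fun j hj => hmax₀ j (Finset.mem_univ j) hj
  have hbasic₀ : IsBasic F i₀ := (H i₀).mpr hfin₀
  haveI : Nonempty {j // SameComp F i₀ j} := ⟨⟨i₀, sameComp_refl F i₀⟩⟩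
  obtain ⟨ρ₀, hρ₀0, -, hsr₀⟩ := exists_perron_irred (compMatrix F i₀)
    (fun a b => hF a.val b.val) (irred_compMatrix F i₀)
  have hsrF : sr F = ENNReal.ofReal ρ₀ := by rw [← hbasic₀, hsr₀]
  have hsrFfin : sr F ≠ ⊤ := by rw [hsrF]; exact ENNReal.ofReal_ne_top
  have hsrF' : ENNReal.ofReal r = sr F := by
    rw [hrdef, ENNReal.ofReal_toReal hsrFfin]
  have hr0 : 0 ≤ r := ENNReal.toReal_nonneg
  -- auxiliary: every i has sr of its component ≤ sr F
  have hcomp_le : ∀ i : n, sr (compMatrix F i) ≤ sr F := by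
    intro i
    set T : Finset n := Finset.univ.filter
      (fun j => (sr (compMatrix F i)).toReal ≤ (sr (compMatrix F j)).toReal) with hT
    have hiT : i ∈ T := by rw [hT, Finset.mem_filter]; exact ⟨Finset.mem_univ _, le_rfl⟩
    obtain ⟨m₀, hm₀T, hTmax⟩ := exists_rel_maximal (fun a b => Reach F b a)
      (fun a b c hab hbc => reach_trans hbc hab) T ⟨i, hiT⟩
    rw [hT, Finset.mem_filter] at hm₀T
    have hst : ∀ j, Reach F j m₀ → ¬ SameComp F m₀ j →
        (sr (compMatrix F j)).toReal < (sr (compMatrix F m₀)).toReal := by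
      intro j hjm hnsame
      by_contra hcon
      push_neg at hcon
      have hjT : j ∈ T := by
        rw [hT, Finset.mem_filter]
        exact ⟨Finset.mem_univ _, le_trans hm₀T.2 hcon⟩
      have := hTmax j hjT hjm
      exact hnsame ⟨this, hjm⟩
    obtain ⟨x, hxne, hxeig⟩ := gpf F hF m₀ hst
    have hmem := mem_spectrum_of_eig F _ x hxne hxeig
    have h1 := le_sr F _ hmem
    rw [abs_of_nonneg ENNReal.toReal_nonneg] at h1
    -- sr comp i = ofReal (toReal ...) ≤ ofReal (toReal comp m₀) ≤ sr F
    haveI : Nonempty {j // SameComp F i j} := ⟨⟨i, sameComp_refl F i⟩⟩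
    obtain ⟨ρi, hρi0, -, hsri⟩ := exists_perron_irred (compMatrix F i)
      (fun a b => hF a.val b.val) (irred_compMatrix F i)
    calc sr (compMatrix F i) = ENNReal.ofReal (sr (compMatrix F i)).toReal := by
          rw [hsri, ENNReal.toReal_ofReal hρi0]
    _ ≤ ENNReal.ofReal (sr (compMatrix F m₀)).toReal := ENNReal.ofReal_le_ofReal hm₀T.2
    _ ≤ sr F := h1
  -- hypotheses for the construction
  have H1 : ∀ i ∈ (Finset.univ : Finset n), IsFinal F i → (sr (compMatrix F i)).toReal = r := by
    intro i _ hfin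
    rw [(H i).mpr hfin]
  have H2 : ∀ i ∈ (Finset.univ : Finset n), ¬ IsFinal F i →
      (sr (compMatrix F i)).toReal < r := by
    intro i _ hfin
    have hne' : sr (compMatrix F i) ≠ sr F := fun h => hfin ((H i).mp h)
    have hle : sr (compMatrix F i) ≤ sr F := hcomp_le i
    have hlt : sr (compMatrix F i) < sr F := lt_of_le_of_ne hle hne'
    have := ENNReal.toReal_strict_mono hsrFfin hlt
    exact this
  obtain ⟨v, hvpos, -, hvrow⟩ := construct_aux Finset.univ.card F hF r Finset.univ le_rfl
    (fun j _ k _ => Finset.mem_univ k) H1 H2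
  refine ⟨v, fun i => hvpos i (Finset.mem_univ i), funext fun j => ?_⟩
  have := hvrow j (Finset.mem_univ j)
  simpa [Matrix.mulVec, dotProduct, Pi.smul_apply, smul_eq_mul] using this

end MainAux
end UmbrellaAux

end Umbrella

/-- A non-negative square matrix has its basic components exactly
coinciding with its final components (it is an umbrella matrix) if and only if it
admits a positive right eigenvector for its spectral radius. -/
theorem umbrella_iff_positive_eigenvector {n : Type*} [Fintype n] [DecidableEq n]
    (F : Matrix n n ℝ) (hF : ∀ i j, 0 ≤ F i j) :
    (∀ i, Umbrella.IsBasic F i ↔ Umbrella.IsFinal F i) ↔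
      ∃ v : n → ℝ, (∀ i, 0 < v i) ∧
        F.mulVec v = (Umbrella.sr F).toReal • v := by
  constructor
  · exact Umbrella.forward F hF
  · rintro ⟨v, hv, heig⟩ i
    exact Umbrella.backward F hF v hv heig i
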